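/- Weakening/substitutivity for α-equivalence: if Δ ⊢ Δ'σ (i.e., Δ ⊢ a#(Xσ) for every a#X ∈ Δ'), then Δ' ⊢ s ≈α t implies Δ ⊢ sσ ≈α tσ. -/

import Mathlib

/-! Nominal terms: atoms, permutations, terms, actions, freshness, α-equivalence,
nominal rewriting and nominal algebra, closed rewriting. -/

abbrev Atom := ℕ
abbrev Unknown := ℕ

/-- Finitely supported permutations of atoms. -/
def FinPerm := {π : Equiv.Perm Atom // {a | π a ≠ a}.Finite}

namespace FinPerm

instance : CoeFun FinPerm (fun _ => Atom → Atom) := ⟨fun π => π.1⟩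

def id : FinPerm := ⟨Equiv.refl Atom, by simp⟩

/-- `comp π π'` is `π ∘ π'` (first apply `π'`, then `π`). -/
def comp (π π' : FinPerm) : FinPerm :=
  ⟨π'.1.trans π.1, ((π.2.union π'.2).subset (by
    intro a ha
    simp only [Set.mem_setOf_eq, Equiv.trans_apply] at ha
    by_cases h : π'.1 a = a
    · exact Or.inl (by simpa [h] using ha)
    · exact Or.inr h))⟩

def inv (π : FinPerm) : FinPerm :=
  ⟨π.1.symm, π.2.subset (by
    intro a ha h
    exact ha (π.1.symm_apply_eq.mpr h.symm))⟩

def swap (a b : Atom) : FinPerm :=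
  ⟨Equiv.swap a b, (Set.toFinite {a, b}).subset (by
    intro c hc
    by_contra h
    simp only [Set.mem_insert_iff, Set.mem_singleton_iff, not_or] at h
    exact hc (Equiv.swap_apply_of_ne_of_ne h.1 h.2))⟩

/-- The (finite) set of atoms moved by `π`. -/
noncomputable def nontriv (π : FinPerm) : Finset Atom := π.2.toFinset

end FinPerm

/-- Nominal terms: atoms, moderated unknowns `π·X`, abstractions `[a]t`,
and term-formers applied to lists of arguments. -/
inductive Term : Type where
  | atom : Atom → Term
  | var  : FinPerm → Unknown → Term
  | abs  : Atom → Term → Term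
  | app  : ℕ → List Term → Term

/-- Permutation action on terms. -/
def permAct (π : FinPerm) : Term → Term
  | .atom a => .atom (π a)
  | .var π' X => .var (π.comp π') X
  | .abs a t => .abs (π a) (permAct π t)
  | .app f ts => .app f (ts.attach.map fun t => permAct π t.1)
decreasing_by
  all_goals simp_wf
  have := List.sizeOf_lt_of_mem t.2
  omega

/-- Substitutions, represented as total maps (the default value of `X` is `id·X`). -/
def Subst := Unknown → Term

/-- A substitution has finite domain. -/
def Subst.FinDom (σ : Subst) : Prop := {X | σ X ≠ .var FinPerm.id X}.Finite

/-- Substitution action on terms. -/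
def subst (σ : Subst) : Term → Term
  | .atom a => .atom a
  | .var π X => permAct π (σ X)
  | .abs a t => .abs a (subst σ t)
  | .app f ts => .app f (ts.attach.map fun t => subst σ t.1)
decreasing_by
  all_goals simp_wf
  have := List.sizeOf_lt_of_mem t.2
  omega

/-- Composition of substitutions: `(σ.comp θ) X = (Xσ)θ`. -/
def Subst.comp (σ θ : Subst) : Subst := fun X => subst θ (σ X)

/-- `σ∘π`, mapping `X` to `π·(σ X)`. -/
def Subst.permComp (σ : Subst) (π : FinPerm) : Subst := fun X => permAct π (σ X)

mutual
/-- Atoms occurring in a term. -/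
noncomputable def atmsF : Term → Finset Atom
  | .atom a => {a}
  | .var π _ => π.nontriv
  | .abs a t => insert a (atmsF t)
  | .app _ ts => atmsLF ts
noncomputable def atmsLF : List Term → Finset Atom
  | [] => ∅
  | t :: ts => atmsF t ∪ atmsLF ts
end

mutual
/-- Unknowns occurring in a term. -/
def unknF : Term → Finset Unknown
  | .atom _ => ∅
  | .var _ X => {X}
  | .abs _ t => unknF t
  | .app _ ts => unknLF ts
def unknLF : List Term → Finset Unknown
  | [] => ∅
  | t :: ts => unknF t ∪ unknLF ts
end

/-- Freshness contexts: finite sets of primitive constraints `a#X`. -/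
abbrev Ctx := Finset (Atom × Unknown)

def ctxAtoms (Δ : Ctx) : Finset Atom := Δ.image Prod.fst
def ctxUnkns (Δ : Ctx) : Finset Unknown := Δ.image Prod.snd

/-- Derivable freshness judgements `Δ ⊢ a # t`. -/
inductive Fresh (Δ : Ctx) : Atom → Term → Prop where
  | atom {a b} : a ≠ b → Fresh Δ a (.atom b)
  | var {a π X} : (π.inv a, X) ∈ Δ → Fresh Δ a (.var π X)
  | absSame {a t} : Fresh Δ a (.abs a t)
  | absDiff {a b t} : a ≠ b → Fresh Δ a t → Fresh Δ a (.abs b t)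
  | app {a f ts} : (∀ t ∈ ts, Fresh Δ a t) → Fresh Δ a (.app f ts)

/-- Derivable α-equivalence judgements `Δ ⊢ s ≈α t`. -/
inductive Aeq (Δ : Ctx) : Term → Term → Prop where
  | atom {a} : Aeq Δ (.atom a) (.atom a)
  | var {π π' : FinPerm} {X : Unknown} : (∀ a : Atom, (π : Atom → Atom) a ≠ (π' : Atom → Atom) a → (a, X) ∈ Δ) →
      Aeq Δ (.var π X) (.var π' X)
  | absSame {a t u} : Aeq Δ t u → Aeq Δ (.abs a t) (.abs a u)
  | absDiff {a b t u} : a ≠ b → Fresh Δ b t → Aeq Δ (permAct (FinPerm.swap b a) t) u →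
      Aeq Δ (.abs a t) (.abs b u)
  | app {f ts us} : ts.length = us.length → (∀ p ∈ ts.zip us, Aeq Δ p.1 p.2) →
      Aeq Δ (.app f ts) (.app f us)

/-- Subterm relation. -/
inductive Subterm : Term → Term → Prop where
  | refl (t) : Subterm t t
  | abs {s t a} : Subterm s t → Subterm s (.abs a t)
  | app {s t f ts} : t ∈ ts → Subterm s t → Subterm s (.app f ts)

mutual
/-- Number of occurrences of the unknown `X` in a term. -/
def countUnk (X : Unknown) : Term → ℕ
  | .atom _ => 0
  | .var _ Y => if Y = X then 1 else 0
  | .abs _ t => countUnk X t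
  | .app _ ts => countUnkL X ts
def countUnkL (X : Unknown) : List Term → ℕ
  | [] => 0
  | t :: ts => countUnk X t + countUnkL X ts
end

/-- A position: a term with a distinguished unknown occurring exactly once, as `id·X`. -/
structure Position where
  ctx : Term
  hole : Unknown
  once : countUnk hole ctx = 1
  idOnly : ∀ π : FinPerm, Subterm (.var π hole) ctx → π = FinPerm.id

def fillAux (X : Unknown) (u : Term) : Term → Term
  | .atom a => .atom a
  | .var π Y => if Y = X then u else .var π Y
  | .abs a t => .abs a (fillAux X u t)
  | .app f ts => .app f (ts.attach.map fun t => fillAux X u t.1)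
decreasing_by
  all_goals simp_wf
  have := List.sizeOf_lt_of_mem t.2
  omega

/-- `C[u]`: place `u` in the hole of the position `C`. -/
def Position.fill (C : Position) (u : Term) : Term := fillAux C.hole u C.ctx

/-- A rule `∇ ⊢ l → r` (also used for axioms `∇ ⊢ l = r`). -/
structure Rule where
  ctx : Ctx
  lhs : Term
  rhs : Term

noncomputable def Rule.atms (R : Rule) : Finset Atom := ctxAtoms R.ctx ∪ atmsF R.lhs ∪ atmsF R.rhs
def Rule.unkn (R : Rule) : Finset Unknown := ctxUnkns R.ctx ∪ unknF R.lhs ∪ unknF R.rhs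

/-- `Δ ⊢ ∇θ`: every constraint of `∇`, instantiated by `θ`, is derivable from `Δ`. -/
def FreshSubst (Δ N : Ctx) (θ : Subst) : Prop :=
  ∀ p ∈ N, Fresh Δ p.1 (subst θ (.var FinPerm.id p.2))

/-- One-step nominal rewriting with the rule `R` in context `Δ`. -/
def OneStepR (R : Rule) (Δ : Ctx) (s t : Term) : Prop :=
  ∃ (C : Position) (s' : Term) (π : FinPerm) (θ : Subst),
    s = C.fill s' ∧ FreshSubst Δ R.ctx θ ∧
    Aeq Δ s' (permAct π (subst θ R.lhs)) ∧
    Aeq Δ (C.fill (permAct π (subst θ R.rhs))) t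

def OneStep (Rw : Set Rule) (Δ : Ctx) (s t : Term) : Prop := ∃ R ∈ Rw, OneStepR R Δ s t

/-- `Δ ⊢_R s ↔* t`: the reflexive-symmetric-transitive closure, including
α-equivalence, of one-step rewriting. -/
inductive RewEq (Rw : Set Rule) (Δ : Ctx) : Term → Term → Prop where
  | step {s t} : OneStep Rw Δ s t → RewEq Rw Δ s t
  | alpha {s t} : Aeq Δ s t → RewEq Rw Δ s t
  | symm {s t} : RewEq Rw Δ s t → RewEq Rw Δ t s
  | trans {s t u} : RewEq Rw Δ s t → RewEq Rw Δ t u → RewEq Rw Δ s u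

/-- Atoms of a judgement `(Δ, s, t)`. -/
noncomputable def judgeAtms (Δ : Ctx) (s t : Term) : Finset Atom := ctxAtoms Δ ∪ atmsF s ∪ atmsF t

def judgeUnkn (Δ : Ctx) (s t : Term) : Finset Unknown := ctxUnkns Δ ∪ unknF s ∪ unknF t

/-- `Γ` is a fresh context for a set of atoms `A`: its atoms avoid `A`. -/
def FreshFor (Γ : Ctx) (A : Finset Atom) : Prop := ∀ p ∈ Γ, p.1 ∉ A

/-- Nominal algebra equality `Δ ⊢_T s = t`. -/
inductive AlgEq (T : Set Rule) (Δ : Ctx) : Term → Term → Prop where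
  | axm {s t} (R : Rule) (hR : R ∈ T) (Γ : Ctx) (C : Position) (π : FinPerm) (θ : Subst) :
      FreshFor Γ (judgeAtms Δ s t) →
      FreshSubst (Δ ∪ Γ) R.ctx θ →
      Aeq (Δ ∪ Γ) s (C.fill (permAct π (subst θ R.lhs))) →
      Aeq (Δ ∪ Γ) (C.fill (permAct π (subst θ R.rhs))) t →
      AlgEq T Δ s t
  | refl (s) : AlgEq T Δ s s
  | symm {s t} : AlgEq T Δ s t → AlgEq T Δ t s
  | trans {s t u} : AlgEq T Δ s t → AlgEq T Δ t u → AlgEq T Δ s u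

/-- `Rw` is a presentation of the equational theory `T`. -/
def Presents (Rw : Set Rule) (T : Set Rule) : Prop :=
  ∀ R : Rule, R ∈ T ↔ (R ∈ Rw ∨ Rule.mk R.ctx R.rhs R.lhs ∈ Rw)

/-- Structural renaming of atoms (by a permutation `τ`) and unknowns (by `ρ`). -/
def renameT (τ : FinPerm) (ρ : Unknown → Unknown) : Term → Term
  | .atom a => .atom (τ a)
  | .var π X => .var (τ.comp (π.comp τ.inv)) (ρ X)
  | .abs a t => .abs (τ a) (renameT τ ρ t)
  | .app f ts => .app f (ts.attach.map fun t => renameT τ ρ t.1)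
decreasing_by
  all_goals simp_wf
  have := List.sizeOf_lt_of_mem t.2
  omega

def renameCtx (τ : FinPerm) (ρ : Unknown → Unknown) (Δ : Ctx) : Ctx :=
  Δ.image (fun p => (τ p.1, ρ p.2))

def Rule.rename (τ : FinPerm) (ρ : Unknown → Unknown) (R : Rule) : Rule :=
  ⟨renameCtx τ ρ R.ctx, renameT τ ρ R.lhs, renameT τ ρ R.rhs⟩

/-- `R'` is a freshened variant of `R`, avoiding also the atoms `A` and unknowns `U`. -/
def FreshenedVariant (A : Finset Atom) (U : Finset Unknown) (R R' : Rule) : Prop :=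
  ∃ (τ : FinPerm) (ρ : Equiv.Perm Unknown),
    R' = R.rename τ ρ ∧
    (∀ a ∈ R.atms, τ a ∉ A ∪ R.atms) ∧
    (∀ X ∈ R.unkn, (ρ X) ∉ U ∪ R.unkn)

/-- A rule (or axiom) `∇ ⊢ l → r` is closed: a freshened variant of `∇ ⊢ (l,r)` matches
`∇ ⊢ (l,r)` in the context `∇` extended with `atms(R') # unkn(R)`. -/
def Rule.Closed (R : Rule) : Prop :=
  ∃ R' : Rule, FreshenedVariant ∅ ∅ R R' ∧
    ∃ σ : Subst, (∀ X, X ∉ R'.unkn → σ X = .var FinPerm.id X) ∧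
      FreshSubst (R.ctx ∪ R'.atms ×ˢ R.unkn) R'.ctx σ ∧
      Aeq (R.ctx ∪ R'.atms ×ˢ R.unkn) (subst σ R'.lhs) R.lhs ∧
      Aeq (R.ctx ∪ R'.atms ×ˢ R.unkn) (subst σ R'.rhs) R.rhs

/-- One-step closed rewriting `Δ ⊢ s →c_R t`. -/
def ClosedStepR (R : Rule) (Δ : Ctx) (s t : Term) : Prop :=
  ∃ R' : Rule, FreshenedVariant (judgeAtms Δ s t ∪ R.atms) (judgeUnkn Δ s t ∪ R.unkn) R R' ∧
    ∃ (C : Position) (s' : Term) (θ : Subst),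
      s = C.fill s' ∧
      FreshSubst (Δ ∪ R'.atms ×ˢ judgeUnkn Δ s t) R'.ctx θ ∧
      Aeq (Δ ∪ R'.atms ×ˢ judgeUnkn Δ s t) s' (subst θ R'.lhs) ∧
      Aeq (Δ ∪ R'.atms ×ˢ judgeUnkn Δ s t) (C.fill (subst θ R'.rhs)) t

def ClosedStep (Rw : Set Rule) (Δ : Ctx) (s t : Term) : Prop := ∃ R ∈ Rw, ClosedStepR R Δ s t

/-- `Δ ⊢_R s ↔c* t`: reflexive-symmetric-transitive closure, including α-equivalence,
of one-step closed rewriting. -/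
inductive ClosedRewEq (Rw : Set Rule) (Δ : Ctx) : Term → Term → Prop where
  | step {s t} : ClosedStep Rw Δ s t → ClosedRewEq Rw Δ s t
  | alpha {s t} : Aeq Δ s t → ClosedRewEq Rw Δ s t
  | symm {s t} : ClosedRewEq Rw Δ s t → ClosedRewEq Rw Δ t s
  | trans {s t u} : ClosedRewEq Rw Δ s t → ClosedRewEq Rw Δ t u → ClosedRewEq Rw Δ s u


section Aux

@[simp] theorem FinPerm.comp_apply (π π' : FinPerm) (a : Atom) :
    (π.comp π' : Atom → Atom) a = π (π' a) := rfl

@[simp] theorem FinPerm.id_apply (a : Atom) : (FinPerm.id : Atom → Atom) a = a := rfl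

@[simp] theorem FinPerm.inv_apply (π : FinPerm) (a : Atom) :
    (π.inv : Atom → Atom) a = π.1.symm a := rfl

@[simp] theorem FinPerm.swap_apply (a b c : Atom) :
    (FinPerm.swap a b : Atom → Atom) c = Equiv.swap a b c := rfl

theorem permAct_app (π : FinPerm) (f : ℕ) (ts : List Term) :
    permAct π (.app f ts) = .app f (ts.map (permAct π)) := by
  rw [permAct]
  simp [List.attach_map_val]

theorem subst_app (σ : Subst) (f : ℕ) (ts : List Term) :
    subst σ (.app f ts) = .app f (ts.map (subst σ)) := by
  rw [subst]
  simp [List.attach_map_val]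

theorem permAct_comp (π π' : FinPerm) (t : Term) :
    permAct π (permAct π' t) = permAct (π.comp π') t := by
  match t with
  | .atom a => simp [permAct]
  | .var π'' X =>
      simp only [permAct]
      congr 1
  | .abs a t => simp [permAct, permAct_comp π π' t]
  | .app f ts =>
      simp only [permAct_app, List.map_map]
      congr 1
      apply List.map_congr_left
      intro t ht
      exact permAct_comp π π' t

theorem permAct_id (t : Term) : permAct FinPerm.id t = t := by
  match t with
  | .atom a => simp [permAct]
  | .var π X =>
      simp only [permAct]
      congr 1
  | .abs a t => simp [permAct, permAct_id t]
  | .app f ts =>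
      rw [permAct_app]
      congr 1
      conv_rhs => rw [← List.map_id ts]
      apply List.map_congr_left
      intro t ht
      exact permAct_id t

theorem subst_permAct (σ : Subst) (π : FinPerm) (t : Term) :
    subst σ (permAct π t) = permAct π (subst σ t) := by
  match t with
  | .atom a => simp [permAct, subst]
  | .var π' X => simp [permAct, subst, permAct_comp]
  | .abs a t => simp [permAct, subst, subst_permAct σ π t]
  | .app f ts =>
      simp only [permAct_app, subst_app, List.map_map]
      congr 1
      apply List.map_congr_left
      intro t ht
      exact subst_permAct σ π t

theorem fresh_equivariant {Δ : Ctx} {b : Atom} {t : Term} (π : FinPerm)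
    (h : Fresh Δ b t) : Fresh Δ (π b) (permAct π t) := by
  induction h with
  | atom hne =>
      rw [permAct]
      exact Fresh.atom (fun he => hne (π.1.injective he))
  | @var π' X hmem =>
      rw [permAct]
      apply Fresh.var
      have : ((π.comp π').inv : Atom → Atom) (π b) = π'.1.symm b := by
        simp [FinPerm.comp, FinPerm.inv]
      rw [this]
      exact hmem
  | absSame =>
      rw [permAct]
      exact Fresh.absSame
  | absDiff hne _ ih =>
      rw [permAct]
      exact Fresh.absDiff (fun he => hne (π.1.injective he)) ih
  | @app f ts _ ih =>
      rw [permAct_app]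
      apply Fresh.app
      intro t ht
      rw [List.mem_map] at ht
      obtain ⟨u, hu, rfl⟩ := ht
      exact ih u hu

theorem fresh_of_permAct {Δ : Ctx} {b : Atom} {t : Term} (π : FinPerm)
    (h : Fresh Δ (π b) (permAct π t)) : Fresh Δ b t := by
  have := fresh_equivariant π.inv h
  rw [permAct_comp] at this
  have hb : π.1.symm (π b) = b := π.1.symm_apply_apply b
  have hc : π.inv.comp π = FinPerm.id := by
    apply Subtype.ext
    exact Equiv.self_trans_symm π.1
  rw [hc, permAct_id] at this
  simpa [hb] using this

theorem fresh_subst {Δ Δ' : Ctx} {σ : Subst} (h : FreshSubst Δ Δ' σ)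
    {a : Atom} {t : Term} (hf : Fresh Δ' a t) : Fresh Δ a (subst σ t) := by
  induction hf with
  | atom hne =>
      rw [subst]
      exact Fresh.atom hne
  | @var π X hmem =>
      rw [subst]
      have := h _ hmem
      simp only [subst] at this
      rw [permAct_id] at this
      have := fresh_equivariant π this
      simpa [π.1.apply_symm_apply] using this
  | absSame =>
      rw [subst]
      exact Fresh.absSame
  | absDiff hne _ ih =>
      rw [subst]
      exact Fresh.absDiff hne ih
  | app _ ih =>
      rw [subst_app]
      apply Fresh.app
      intro t ht
      rw [List.mem_map] at ht
      obtain ⟨u, hu, rfl⟩ := ht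
      exact ih u hu

theorem mem_zip_map_same {α β : Type*} (f g : α → β) :
    ∀ (l : List α) (p : β × β), p ∈ (l.map f).zip (l.map g) → ∃ x ∈ l, p = (f x, g x) := by
  intro l
  induction l with
  | nil => simp
  | cons a l ih =>
      intro p hp
      simp only [List.map_cons, List.zip_cons_cons, List.mem_cons] at hp
      rcases hp with rfl | hp
      · exact ⟨a, List.mem_cons_self, rfl⟩
      · obtain ⟨x, hx, rfl⟩ := ih p hp
        exact ⟨x, List.mem_cons_of_mem a hx, rfl⟩

theorem aeq_perm {Δ : Ctx} : ∀ (t : Term) (π π' : FinPerm),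
    (∀ a : Atom, (π : Atom → Atom) a ≠ (π' : Atom → Atom) a → Fresh Δ a t) →
    Aeq Δ (permAct π t) (permAct π' t) := by
  intro t
  induction t using permAct.induct with
  | case1 a =>
      intro π π' h
      simp only [permAct]
      by_cases he : (π : Atom → Atom) a = π' a
      · rw [he]; exact Aeq.atom
      · exfalso
        cases h a he with
        | atom hne => exact hne rfl
  | case2 π0 X =>
      intro π π' h
      simp only [permAct]
      apply Aeq.var
      intro a ha
      simp only [FinPerm.comp_apply] at ha
      have := h (π0 a) ha
      cases this with
      | var hmem => simpa [π0.1.symm_apply_apply] using hmem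
  | case3 a t ih =>
      intro π π' h
      simp only [permAct]
      by_cases he : (π : Atom → Atom) a = π' a
      · rw [he]
        apply Aeq.absSame
        apply ih
        intro b hb
        have hba : b ≠ a := by
          rintro rfl; exact hb he
        cases h b hb with
        | absSame => exact absurd rfl hba
        | absDiff _ hf => exact hf
      · apply Aeq.absDiff he
        · -- Fresh Δ (π' a) (permAct π t)
          obtain ⟨b, hπb⟩ : ∃ b, (π : Atom → Atom) b = (π' : Atom → Atom) a :=
            ⟨π.1.symm ((π' : Atom → Atom) a), π.1.apply_symm_apply _⟩
          have hba : b ≠ a := by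
            rintro rfl
            exact he hπb
          have hbb : (π : Atom → Atom) b ≠ π' b := by
            rw [hπb]
            intro hcon
            exact hba (π'.1.injective hcon.symm)
          have hfb : Fresh Δ b t := by
            cases h b hbb with
            | absSame => exact absurd rfl hba
            | absDiff _ hf => exact hf
          have := fresh_equivariant π hfb
          rwa [hπb] at this
        · rw [permAct_comp]
          apply ih
          intro b hb
          simp only [FinPerm.comp_apply, FinPerm.swap_apply] at hb
          by_cases hba : b = a
          · subst hba
            exfalso
            apply hb
            rw [Equiv.swap_apply_right]
          · have hbb : (π : Atom → Atom) b ≠ π' b := by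
              intro hcon
              apply hb
              rw [hcon]
              apply Equiv.swap_apply_of_ne_of_ne
              · intro hcon2
                exact hba (π'.1.injective hcon2)
              · intro hcon2
                rw [← hcon] at hcon2
                exact hba (π.1.injective hcon2)
            cases h b hbb with
            | absSame => exact absurd rfl hba
            | absDiff _ hf => exact hf
  | case4 f ts ih =>
      intro π π' h
      simp only [permAct_app]
      apply Aeq.app
      · simp
      · intro p hp
        obtain ⟨x, hx, rfl⟩ := mem_zip_map_same _ _ ts p hp
        apply ih ⟨x, hx⟩
        intro b hb
        cases h b hb with
        | app hf => exact hf x hx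

end Aux

/-- Weakening/substitutivity for α-equivalence: if `Δ ⊢ Δ'σ` then `Δ' ⊢ s ≈α t` implies
`Δ ⊢ sσ ≈α tσ`. -/
theorem aeq_weakening (Δ Δ' : Ctx) (σ : Subst) (hσ : σ.FinDom)
    (h : FreshSubst Δ Δ' σ) (s t : Term) (hst : Aeq Δ' s t) :
    Aeq Δ (subst σ s) (subst σ t) := by
  induction hst with
  | atom =>
      rw [subst]
      exact Aeq.atom
  | @var π π' X hmem =>
      simp only [subst]
      apply aeq_perm
      intro a ha
      have := h _ (hmem a ha)
      simp only [subst] at this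
      rwa [permAct_id] at this
  | absSame _ ih =>
      simp only [subst]
      exact Aeq.absSame ih
  | @absDiff a b t u hne hf _ ih =>
      simp only [subst]
      apply Aeq.absDiff hne (fresh_subst h hf)
      rw [← subst_permAct]
      exact ih
  | @app f ts us hlen _ ih =>
      simp only [subst_app]
      apply Aeq.app
      · simp [hlen]
      · intro p hp
        rw [List.zip_map] at hp
        rw [List.mem_map] at hp
        obtain ⟨q, hq, rfl⟩ := hp
        exact ih q hq
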